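/- Let A ∈ ℝ^{M×N} be a real matrix and η ≠ 0, λ ∈ ℝ. Consider the (N+M)×(N+M) block matrix B := [[I_N, −(1/η)Aᵀ], [2λA, I_M − (2λ/η)AAᵀ]], so that the alternating gradient descent–ascent iteration x^r = x^{r−1} − (1/η)Aᵀy^{r−1}, y^r = y^{r−1} + 2λAx^r on the bilinear problem min_x max_y yᵀAx satisfies (x^r; y^r) = B (x^{r−1}; y^{r−1}). Then det B = 1; consequently B has a complex eigenvalue of modulus at least 1, so the linear system describing the dynamics of (x^r, y^r) is never a contraction, regardless of the choices of η and λ. -/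

import Mathlib

/-- The iteration matrix of the alternating gradient descent–ascent scheme
`x⁺ = x − (1/η)Aᵀy`, `y⁺ = y + 2λAx⁺` for the bilinear problem `min_x max_y yᵀAx`. -/
noncomputable def gdaMatrix {N M : ℕ} (A : Matrix (Fin M) (Fin N) ℝ) (η lam : ℝ) :
    Matrix (Fin N ⊕ Fin M) (Fin N ⊕ Fin M) ℝ :=
  Matrix.fromBlocks (1 : Matrix (Fin N) (Fin N) ℝ) ((-(1 / η)) • A.transpose)
    ((2 * lam) • A) ((1 : Matrix (Fin M) (Fin M) ℝ) - (2 * lam / η) • (A * A.transpose))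

lemma prod_lt_one_of_forall_lt {s : Multiset ℝ} (hs : s ≠ 0)
    (h : ∀ a ∈ s, 0 ≤ a ∧ a < 1) : s.prod < 1 := by
  induction s using Multiset.induction_on with
  | empty => exact absurd rfl hs
  | cons a t ih =>
    rcases eq_or_ne t 0 with rfl | ht
    · simpa using (h a (by simp)).2
    · have hp := ih ht (fun b hb => h b (Multiset.mem_cons_of_mem hb))
      have hpos : 0 ≤ t.prod := Multiset.prod_nonneg fun b hb => (h b (Multiset.mem_cons_of_mem hb)).1
      rw [Multiset.prod_cons]
      calc a * t.prod ≤ 1 * t.prod := by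
            exact mul_le_mul_of_nonneg_right (h a (by simp)).2.le hpos
        _ = t.prod := one_mul _
        _ < 1 := hp


/-- **Example 1** (instability of plain alternating gradient descent–ascent on bilinear
problems): the GDA iteration is the linear map given by `gdaMatrix A η lam`, whose
determinant equals `1`; consequently it has a complex eigenvalue (a root of its
characteristic polynomial) of modulus at least `1`, so the linear dynamics of
`(x^r, y^r)` is never a contraction, regardless of `η ≠ 0` and `λ`. -/
theorem gda_bilinear_unstable {N M : ℕ} (hN : 0 < N) (hM : 0 < M)
    (A : Matrix (Fin M) (Fin N) ℝ) (η lam : ℝ) (hη : η ≠ 0) :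
    (∀ (x : Fin N → ℝ) (y : Fin M → ℝ),
        (gdaMatrix A η lam).mulVec (Sum.elim x y) =
          Sum.elim (x - (1 / η) • A.transpose.mulVec y)
            (y + (2 * lam) • A.mulVec (x - (1 / η) • A.transpose.mulVec y)))
    ∧ (gdaMatrix A η lam).det = 1
    ∧ (∃ μ : ℂ, ((gdaMatrix A η lam).map (algebraMap ℝ ℂ)).charpoly.IsRoot μ
        ∧ 1 ≤ ‖μ‖) := by
  have hdet : (gdaMatrix A η lam).det = 1 := by
    rw [gdaMatrix, Matrix.det_fromBlocks_one₁₁]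
    have : (1 : Matrix (Fin M) (Fin M) ℝ) - (2 * lam / η) • (A * A.transpose) -
        ((2 * lam) • A) * ((-(1 / η)) • A.transpose) = 1 := by
      rw [Matrix.smul_mul, Matrix.mul_smul, smul_smul]
      ring_nf
      rw [sub_sub, ← add_smul]
      ring_nf
      simp
    rw [this, Matrix.det_one]
  refine ⟨?_, hdet, ?_⟩
  · intro x y
    rw [gdaMatrix, Matrix.fromBlocks_mulVec]
    simp only [sub_eq_add_neg, neg_smul, ← smul_neg]
    simp only [Sum.elim_comp_inl, Sum.elim_comp_inr, Matrix.add_mulVec, Matrix.sub_mulVec,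
        Matrix.neg_mulVec, Matrix.smul_mulVec, Matrix.one_mulVec, ← Matrix.mulVec_mulVec,
        Matrix.mulVec_add, Matrix.mulVec_sub, smul_sub, smul_smul, sub_eq_add_neg,
        div_eq_mul_inv, one_div, smul_add, smul_neg, neg_smul, Matrix.mulVec_neg, Matrix.mulVec_smul]
    funext i
    cases i with
    | inl i => rfl
    | inr i =>
      simp only [Sum.elim_inr, Pi.add_apply, Pi.neg_apply, Pi.smul_apply, smul_eq_mul]
      ring
  · set B := (gdaMatrix A η lam).map (algebraMap ℝ ℂ) with hB
    have hdetB : B.det = 1 := by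
      rw [hB, ← RingHom.mapMatrix_apply, ← RingHom.map_det, hdet, map_one]
    have hprod : B.charpoly.roots.prod = 1 := by
      rw [← Matrix.det_eq_prod_roots_charpoly, hdetB]
    have hcard : B.charpoly.roots ≠ 0 := by
      intro h0
      have hmonic := B.charpoly_monic
      have hsplit := IsAlgClosed.splits (k := ℂ) B.charpoly
      have : B.charpoly.natDegree = Fintype.card (Fin N ⊕ Fin M) :=
        Matrix.charpoly_natDegree_eq_dim B
      have hcard' : B.charpoly.roots.card = B.charpoly.natDegree :=
        (Polynomial.splits_iff_card_roots).mp (by simpa using hsplit)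
      rw [h0, Multiset.card_zero, this] at hcard'
      simp [Fintype.card_sum] at hcard'
      omega
    by_contra hcon
    push_neg at hcon
    have hall : ∀ μ ∈ B.charpoly.roots, ‖μ‖ < 1 := by
      intro μ hμ
      exact hcon μ (Polynomial.isRoot_of_mem_roots hμ)
    have : ‖B.charpoly.roots.prod‖ < 1 := by
      rw [show ‖B.charpoly.roots.prod‖ = (B.charpoly.roots.map (fun x => ‖x‖)).prod from map_multiset_prod (normHom : ℂ →*₀ ℝ) _]
      refine prod_lt_one_of_forall_lt ?_ ?_
      · simpa using hcard
      · intro a ha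
        simp only [Multiset.mem_map] at ha
        obtain ⟨μ, hμ, rfl⟩ := ha
        exact ⟨norm_nonneg _, hall μ hμ⟩
    rw [hprod] at this
    simp at this
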